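/- (Kochen–Stone Lemma) Let (Ω, ν) be a finite measure space and {A_n} a sequence of measurable subsets of Ω such that ∑_{n≥1} ν(A_n) = +∞ and liminf_{N→∞} ( ∑_{n,m=1}^{N} ν(A_n ∩ A_m) ) / ( ∑_{n=1}^{N} ν(A_n) )² < +∞. Then ν( limsup_n A_n ) > 0, i.e. the set of points of Ω contained in infinitely many of the A_n has positive measure. -/

import Mathlib

open MeasureTheory Filter

open scoped ENNReal

namespace KochenStoneAux

variable {Ω : Type*} [MeasurableSpace Ω] (ν : Measure Ω) [IsFiniteMeasure ν]
  (A : ℕ → Set Ω)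

noncomputable def f (A : ℕ → Set Ω) (N : ℕ) (x : Ω) : ℝ≥0∞ :=
  ∑ n ∈ Finset.range N, (A n).indicator 1 x

lemma f_meas (hA : ∀ n, MeasurableSet (A n)) (N : ℕ) : Measurable (f A N) := by
  apply Finset.measurable_sum
  intro n _
  exact (measurable_const.indicator (hA n))

lemma int_f (hA : ∀ n, MeasurableSet (A n)) (N : ℕ) :
    ∫⁻ x, f A N x ∂ν = ∑ n ∈ Finset.range N, ν (A n) := by
  simp only [f]
  rw [lintegral_finset_sum]
  · exact Finset.sum_congr rfl fun n _ => lintegral_indicator_one (hA n)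
  · exact fun n _ => measurable_const.indicator (hA n)

lemma int_f_sq (hA : ∀ n, MeasurableSet (A n)) (N : ℕ) :
    ∫⁻ x, (f A N x) ^ 2 ∂ν
      = ∑ n ∈ Finset.range N, ∑ m ∈ Finset.range N, ν (A n ∩ A m) := by
  have hpt : ∀ x, (f A N x) ^ 2
      = ∑ n ∈ Finset.range N, ∑ m ∈ Finset.range N, (A n ∩ A m).indicator 1 x := by
    intro x
    rw [sq, f, Finset.sum_mul_sum]
    refine Finset.sum_congr rfl fun n _ => Finset.sum_congr rfl fun m _ => ?_
    rw [Set.inter_indicator_one]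
    rfl
  simp only [hpt]
  rw [lintegral_finset_sum]
  · refine Finset.sum_congr rfl fun n _ => ?_
    rw [lintegral_finset_sum]
    · exact Finset.sum_congr rfl fun m _ =>
        lintegral_indicator_one ((hA n).inter (hA m))
    · exact fun m _ => measurable_const.indicator ((hA n).inter (hA m))
  · exact fun n _ => Finset.measurable_sum _
      fun m _ => measurable_const.indicator ((hA n).inter (hA m))

end KochenStoneAux

/-- Kochen–Stone Lemma: if `∑ ν(A n) = ∞` and the liminf of
`(∑_{n,m<N} ν(A n ∩ A m)) / (∑_{n<N} ν(A n))²` is finite, then the set of points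
lying in infinitely many `A n` has positive measure. -/
theorem stmt_2 {Ω : Type*} [MeasurableSpace Ω] (ν : Measure Ω)
    [IsFiniteMeasure ν] (A : ℕ → Set Ω) (hA : ∀ n, MeasurableSet (A n))
    (hdiv : ∑' n, ν (A n) = ⊤)
    (hliminf : liminf (fun N =>
      (∑ n ∈ Finset.range N, ∑ m ∈ Finset.range N, ν (A n ∩ A m)) /
        (∑ n ∈ Finset.range N, ν (A n)) ^ 2) atTop < ⊤) :
    0 < ν (limsup A atTop) := by
  classical
  set S : ℕ → ℝ≥0∞ := fun N => ∑ n ∈ Finset.range N, ν (A n) with hSdef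
  set T : ℕ → ℝ≥0∞ := fun N =>
    ∑ n ∈ Finset.range N, ∑ m ∈ Finset.range N, ν (A n ∩ A m) with hTdef
  set c : ℝ≥0∞ := ν Set.univ with hcdef
  have hc_ne_top : c ≠ ⊤ := measure_ne_top ν _
  have hc_ne_zero : c ≠ 0 := by
    intro h
    have hall : ∀ n, ν (A n) = 0 := fun n =>
      le_antisymm (h ▸ measure_mono (Set.subset_univ _)) zero_le
    simp [hall] at hdiv
  set θ : ℝ≥0∞ := (2 * c)⁻¹ with hθdef
  have hθ_ne_zero : θ ≠ 0 := by
    simp [hθdef, ENNReal.inv_ne_zero, ENNReal.mul_ne_top, hc_ne_top]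
  have hθc : θ * c = 2⁻¹ := by
    rw [hθdef, ENNReal.mul_inv (Or.inr hc_ne_top) (Or.inr hc_ne_zero), mul_assoc,
      ENNReal.inv_mul_cancel hc_ne_zero hc_ne_top, mul_one]
  set f := KochenStoneAux.f A with hfdef
  set E : ℕ → Set Ω := fun N => {x | θ * S N ≤ f N x} with hEdef
  have hE_meas : ∀ N, MeasurableSet (E N) :=
    fun N => measurableSet_le measurable_const (KochenStoneAux.f_meas A hA N)
  have hS_ne_top : ∀ N, S N ≠ ⊤ := by
    intro N
    exact (ENNReal.sum_lt_top.mpr fun n _ => measure_lt_top ν _).ne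
  have hT_intf : ∀ N, ∫⁻ x, (f N x) ^ 2 ∂ν = T N :=
    fun N => KochenStoneAux.int_f_sq ν A hA N
  have hS_top : Tendsto S atTop (nhds ⊤) := by
    have := ENNReal.tendsto_nat_tsum (fun n => ν (A n))
    rwa [hdiv] at this
  -- lower bound for the integral over E N
  have hEf : ∀ N, S N ≠ 0 → S N / 2 ≤ ∫⁻ x in E N, f N x ∂ν := by
    intro N hS0
    have hsplit : (∫⁻ x in E N, f N x ∂ν) + ∫⁻ x in (E N)ᶜ, f N x ∂ν = S N := by
      rw [lintegral_add_compl _ (hE_meas N), KochenStoneAux.int_f ν A hA N]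
    have hcompl : ∫⁻ x in (E N)ᶜ, f N x ∂ν ≤ S N / 2 := by
      calc ∫⁻ x in (E N)ᶜ, f N x ∂ν ≤ ∫⁻ _ in (E N)ᶜ, θ * S N ∂ν := by
            refine setLIntegral_mono measurable_const fun x hx => ?_
            exact le_of_lt (lt_of_not_ge hx)
        _ = θ * S N * ν ((E N)ᶜ) := by rw [setLIntegral_const]
        _ ≤ θ * S N * c := by
            gcongr
            exact measure_mono (Set.subset_univ _)
        _ = S N / 2 := by
            rw [mul_comm θ (S N), mul_assoc, hθc, ENNReal.div_eq_inv_mul, mul_comm]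
    have h1 : S N - S N / 2 ≤ ∫⁻ x in E N, f N x ∂ν := by
      rw [tsub_le_iff_right]
      calc S N = (∫⁻ x in E N, f N x ∂ν) + ∫⁻ x in (E N)ᶜ, f N x ∂ν := hsplit.symm
        _ ≤ (∫⁻ x in E N, f N x ∂ν) + S N / 2 := by gcongr
    rwa [ENNReal.sub_half (hS_ne_top N)] at h1
  -- Cauchy–Schwarz
  have hCS : ∀ N, (∫⁻ x in E N, f N x ∂ν) ^ 2 ≤ T N * ν (E N) := by
    intro N
    have hconj : Real.HolderConjugate 2 2 := Real.HolderConjugate.two_two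
    have h := ENNReal.lintegral_mul_le_Lp_mul_Lq (ν.restrict (E N)) hconj
      (f := f N) (g := fun _ => (1 : ℝ≥0∞))
      ((KochenStoneAux.f_meas A hA N)).aemeasurable aemeasurable_const
    simp only [Pi.mul_apply, mul_one, ENNReal.one_rpow, lintegral_one,
      Measure.restrict_apply_univ] at h
    have hrp : ∀ y : ℝ≥0∞, y ^ (2:ℝ) = y ^ 2 := by
      intro y
      rw [← ENNReal.rpow_natCast y 2]
      norm_num
    simp only [hrp] at h
    have hTle : ∫⁻ x in E N, (f N x) ^ 2 ∂ν ≤ T N := by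
      rw [← hT_intf N]
      exact setLIntegral_le_lintegral _ _
    have h2 : ∫⁻ x in E N, f N x ∂ν ≤ (T N) ^ ((1:ℝ)/2) * ν (E N) ^ ((1:ℝ)/2) := by
      exact h.trans (mul_le_mul' (ENNReal.rpow_le_rpow hTle (by norm_num)) le_rfl)
    calc (∫⁻ x in E N, f N x ∂ν) ^ 2
        ≤ ((T N) ^ ((1:ℝ)/2) * ν (E N) ^ ((1:ℝ)/2)) ^ 2 := by gcongr
      _ = T N * ν (E N) := by
          rw [mul_pow, ← ENNReal.rpow_natCast ((T N) ^ ((1:ℝ)/2)) 2,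
            ← ENNReal.rpow_natCast (ν (E N) ^ ((1:ℝ)/2)) 2,
            ← ENNReal.rpow_mul, ← ENNReal.rpow_mul]
          norm_num
  -- choose C with liminf < C < ⊤
  obtain ⟨C, hLC, hC_top⟩ := exists_between hliminf
  have hC0 : 0 < C := lt_of_le_of_lt zero_le hLC
  set b : ℝ≥0∞ := (4 * C)⁻¹ with hbdef
  have hb_pos : 0 < b := by
    rw [hbdef]
    exact ENNReal.inv_pos.mpr (ENNReal.mul_ne_top (by norm_num) hC_top.ne)
  -- frequently, ν (E N) ≥ b
  have hfreq : ∃ᶠ N in atTop, b ≤ ν (E N) := by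
    have hfr : ∃ᶠ N in atTop, T N / S N ^ 2 < C := frequently_lt_of_liminf_lt (h := hLC)
    have hev : ∀ᶠ N in atTop, 0 < S N :=
      hS_top.eventually_const_lt (by norm_num)
    refine (hfr.and_eventually hev).mono ?_
    rintro N ⟨hTC, hS0⟩
    have hS0' : S N ≠ 0 := hS0.ne'
    have hS2_ne_zero : S N ^ 2 ≠ 0 := pow_ne_zero _ hS0'
    have hS2_ne_top : S N ^ 2 ≠ ⊤ := by
      simp [ENNReal.pow_eq_top_iff, hS_ne_top N]
    have hTC' : T N ≤ C * S N ^ 2 := by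
      rw [ENNReal.div_lt_iff (Or.inl hS2_ne_zero) (Or.inl hS2_ne_top)] at hTC
      exact hTC.le
    have key : S N ^ 2 ≤ 4 * (C * S N ^ 2 * ν (E N)) := by
      have h1 : (S N / 2) ^ 2 ≤ T N * ν (E N) :=
        le_trans (by gcongr; exact hEf N hS0') (hCS N)
      have h2 : (S N / 2) ^ 2 = S N ^ 2 / 4 := by
        rw [div_eq_mul_inv, mul_pow, ← ENNReal.inv_pow, ← div_eq_mul_inv]
        norm_num
      have h3 : S N ^ 2 / 4 ≤ C * S N ^ 2 * ν (E N) :=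
        h2 ▸ h1.trans (by gcongr)
      calc S N ^ 2 = 4 * (S N ^ 2 / 4) := by
            rw [ENNReal.mul_div_cancel' (by norm_num) (by norm_num)]
        _ ≤ 4 * (C * S N ^ 2 * ν (E N)) := by gcongr
    have key2 : 1 ≤ 4 * C * ν (E N) := by
      have : S N ^ 2 * 1 ≤ S N ^ 2 * (4 * C * ν (E N)) := by
        rw [mul_one]
        calc S N ^ 2 ≤ 4 * (C * S N ^ 2 * ν (E N)) := key
          _ = S N ^ 2 * (4 * C * ν (E N)) := by ring
      exact (ENNReal.mul_le_mul_iff_right hS2_ne_zero hS2_ne_top).mp this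
    calc b = (4 * C)⁻¹ * 1 := by rw [mul_one]
      _ ≤ (4 * C)⁻¹ * (4 * C * ν (E N)) := by gcongr
      _ = ν (E N) := by
          rw [← mul_assoc, ENNReal.inv_mul_cancel
            (by simp [hC0.ne']) (ENNReal.mul_ne_top (by norm_num) hC_top.ne), one_mul]
  -- the tail sets
  set G : ℕ → Set Ω := fun N => ⋃ n, ⋃ (_ : n ≥ N), E n with hGdef
  have hG_anti : Antitone G := by
    intro i j hij
    exact Set.iUnion₂_mono' fun n hn => ⟨n, le_trans hij hn, subset_rfl⟩
  have hG_meas : ∀ N, MeasurableSet (G N) :=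
    fun N => MeasurableSet.iUnion fun n => MeasurableSet.iUnion fun _ => hE_meas n
  have hG_measure : ν (⋂ N, G N) = ⨅ N, ν (G N) :=
    Directed.measure_iInter (fun N => (hG_meas N).nullMeasurableSet)
      (hG_anti.directed_ge) ⟨0, measure_ne_top ν _⟩
  have hG_lb : ∀ N, b ≤ ν (G N) := by
    intro N
    obtain ⟨n, hnN, hbn⟩ := (frequently_atTop.mp hfreq) N
    refine le_trans hbn (measure_mono ?_)
    intro y hy
    exact Set.mem_iUnion₂.mpr ⟨n, hnN, hy⟩
  -- ⋂ G ⊆ limsup A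
  have hsub : (⋂ N, G N) ⊆ limsup A atTop := by
    intro x hx
    rw [Set.mem_iInter] at hx
    rw [mem_limsup_iff_frequently_mem]
    by_contra hcon
    rw [not_frequently] at hcon
    obtain ⟨k, hk⟩ := eventually_atTop.mp hcon
    have hfb : ∀ n, f n x ≤ k := by
      intro n
      calc f n x ≤ ∑ i ∈ Finset.range n, if i < k then (1:ℝ≥0∞) else 0 := by
            refine Finset.sum_le_sum fun i _ => ?_
            by_cases hik : i < k
            · simp only [hik, if_true]
              exact Set.indicator_le_self' (by simp) x
            · simp only [hik, if_false]
              have : x ∉ A i := hk i (le_of_not_gt hik)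
              simp [Set.indicator_of_notMem this]
        _ = ((Finset.range n).filter (fun i => i < k)).card := by
            rw [Finset.sum_boole]
        _ ≤ (k : ℝ≥0∞) := by
            have : ((Finset.range n).filter (fun i => i < k)).card ≤ k := by
              calc ((Finset.range n).filter (fun i => i < k)).card
                  ≤ (Finset.range k).card := Finset.card_le_card (by
                    intro i hi
                    simp only [Finset.mem_filter] at hi
                    exact Finset.mem_range.mpr hi.2)
                _ = k := Finset.card_range k
            exact_mod_cast this
    have hθS : Tendsto (fun N => θ * S N) atTop (nhds ⊤) := by
      have := ENNReal.Tendsto.const_mul (a := θ) hS_top (Or.inl ENNReal.top_ne_zero)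
      rwa [ENNReal.mul_top hθ_ne_zero] at this
    have hev2 : ∀ᶠ N in atTop, (k : ℝ≥0∞) < θ * S N :=
      hθS.eventually_const_lt (ENNReal.natCast_lt_top k)
    obtain ⟨N, hN⟩ := eventually_atTop.mp hev2
    obtain ⟨n, hnN, hxn⟩ := Set.mem_iUnion₂.mp (hx N)
    have h1 : θ * S n ≤ f n x := hxn
    exact absurd (le_trans h1 (hfb n)) (not_le.mpr (hN n hnN))
  calc (0:ℝ≥0∞) < b := hb_pos
    _ ≤ ⨅ N, ν (G N) := le_iInf hG_lb
    _ = ν (⋂ N, G N) := hG_measure.symm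
    _ ≤ ν (limsup A atTop) := measure_mono hsub
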